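/- arXiv:1509.08362 — 3 statements merged into one kernel-verified Lean document; each statement's English description precedes it below -/
import Mathlib

section
/- Let m be odd and let 𝒥 = (J_1,…,J_m) be a cover of I = {1,…,n} satisfying conditions (B1) and (B2). For each k let W^{J_k} have the Gibbs block structure for J_k, let ε ∈ [0,1), and let Ŵ^{J_k} have entries Ŵ^{J_k}_{i,j} = W^{J_k}_{i,j} + ε·1[i ∈ J_k and j ∈ J_k ∪ ∂J_k]. Set 𝒲̂ = 𝒲̂_even·𝒲̂_odd, where 𝒲̂_odd = Ŵ^{J_m}·Ŵ^{J_{m−2}}⋯Ŵ^{J_3}·Ŵ^{J_1} and 𝒲̂_even = Ŵ^{J_{m−1}}·Ŵ^{J_{m−3}}⋯Ŵ^{J_4}·Ŵ^{J_2}. Let J_{−k} = ⋃_{l≠k} J_l, L = max_k |J_k|, λ = max_k max_{i ∈ I∖J_{−k}} (W^{J_k}_{i,∂−J_k} + W^{J_k}_{i,∂+J_k}), and W̄ = max_k max_{i∈J_k} Σ_{j∈∂J_k} W^{J_k}_{i,j} (with the conventions W^{J_1}_{i,∂−J_1} = 0 and W^{J_m}_{i,∂+J_m} = 0). Then the row sums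 r_i = Σ_j 𝒲̂_{i,j} satisfy: r_i ≤ λ² + ε·(λ(L+4) + ε(L+2)² + L·max(1,W̄)) if i ∈ I∖J_{−k} for an even k; r_i ≤ λ + ε·(L+2) if i ∈ I∖J_{−k} for an odd k; and r_i ≤ λ·W̄ + ε·(W̄(L+2) + 2λ + ε(L+2)² + L·max(1,W̄)) if i ∈ J_k ∩ J_{−k} for an even k. -/
open Finset

/-- The boundary `∂J` of a block `J ⊆ I`: indices outside `J` adjacent to `J`. -/
def bdry {n : ℕ} (J : Finset (Fin n)) : Finset (Fin n) :=
  Finset.univ.filter fun t => t ∉ J ∧ ∃ s ∈ J, ((s : ℕ) = (t : ℕ) + 1 ∨ (t : ℕ) = (s : ℕ) + 1)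

/-- `W` has the Gibbs block structure for block `J`: entries in `[0,1]`, rows outside `J`
are identity rows, and rows in `J` vanish outside `∂J`. -/
def GibbsBlock {n : ℕ} (J : Finset (Fin n)) (W : Matrix (Fin n) (Fin n) ℝ) : Prop :=
  (∀ i j, 0 ≤ W i j ∧ W i j ≤ 1) ∧
  (∀ i, i ∉ J → ∀ j, W i j = if i = j then 1 else 0) ∧
  (∀ i ∈ J, ∀ j, j ∉ bdry J → W i j = 0)

/-- Maximum absolute row sum norm `‖A‖_∞`. -/
noncomputable def rowNorm {n : ℕ} (A : Matrix (Fin n) (Fin n) ℝ) : ℝ :=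
  ⨆ i, ∑ j, |A i j|

/-- The list `[m, m-1, …, 1]`. -/
def descList (m : ℕ) : List ℕ := (List.range m).map fun i => m - i

/-- A block is a (nonempty) integer interval. -/
def IsIntervalBlock {n : ℕ} (J : Finset (Fin n)) : Prop :=
  J.Nonempty ∧ ∀ a ∈ J, ∀ b ∈ J, ∀ c : Fin n, a ≤ c → c ≤ b → c ∈ J

/-- Smallest index of a block (as a natural number). -/
noncomputable def blockMin {n : ℕ} (J : Finset (Fin n)) : ℕ :=
  sInf {t : ℕ | ∃ s ∈ J, (s : ℕ) = t}

/-- Largest index of a block (as a natural number). -/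
def blockMax {n : ℕ} (J : Finset (Fin n)) : ℕ := J.sup fun t => (t : ℕ)

/-- Condition (B1): blocks are intervals, ordered by their min and max elements. -/
def CondB1 {n : ℕ} (m : ℕ) (J : ℕ → Finset (Fin n)) : Prop :=
  (∀ k ∈ Finset.Icc 1 m, IsIntervalBlock (J k)) ∧
  ∀ j k, 1 ≤ j → j < k → k ≤ m →
    blockMin (J j) < blockMin (J k) ∧ blockMax (J j) < blockMax (J k)

/-- Condition (B2): non-consecutive blocks are separated. -/
def CondB2 {n : ℕ} (m : ℕ) (J : ℕ → Finset (Fin n)) : Prop :=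
  ∀ j k, 1 ≤ j → j + 2 ≤ k → k ≤ m → blockMax (J j) + 1 < blockMin (J k)

/-- Matrix entry addressed with integer indices; out-of-range indices give `0`. -/
noncomputable def entryZ {n : ℕ} (A : Matrix (Fin n) (Fin n) ℝ) (i j : ℤ) : ℝ :=
  if hi : 0 ≤ i ∧ i < (n : ℤ) then
    if hj : 0 ≤ j ∧ j < (n : ℤ) then A ⟨i.toNat, by omega⟩ ⟨j.toNat, by omega⟩ else 0
  else 0

/-- `J_{-k} = ⋃_{l ≠ k} J_l`. -/
def Jminus {n : ℕ} (m : ℕ) (J : ℕ → Finset (Fin n)) (k : ℕ) : Finset (Fin n) :=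
  ((Finset.Icc 1 m).erase k).biUnion J

/-- Left boundary entry `W^{J_k}_{i, ∂−J_k}`, with the conventions that it is `0` for the
first block `k = 1` and for nonexistent boundary points. -/
noncomputable def eL {n : ℕ} (m : ℕ) (J : ℕ → Finset (Fin n))
    (W : ℕ → Matrix (Fin n) (Fin n) ℝ) (k : ℕ) (i : Fin n) : ℝ :=
  if k = 1 then 0 else entryZ (W k) (i : ℤ) ((blockMin (J k) : ℤ) - 1)

/-- Right boundary entry `W^{J_k}_{i, ∂+J_k}`, with the conventions that it is `0` for the
last block `k = m` and for nonexistent boundary points. -/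
noncomputable def eR {n : ℕ} (m : ℕ) (J : ℕ → Finset (Fin n))
    (W : ℕ → Matrix (Fin n) (Fin n) ℝ) (k : ℕ) (i : Fin n) : ℝ :=
  if k = m then 0 else entryZ (W k) (i : ℤ) ((blockMax (J k) : ℤ) + 1)

/-- The ε-perturbed matrix `Ŵ^{J_k}`. -/
noncomputable def hatW {n : ℕ} (J : ℕ → Finset (Fin n))
    (W : ℕ → Matrix (Fin n) (Fin n) ℝ) (ε : ℝ) (k : ℕ) : Matrix (Fin n) (Fin n) ℝ :=
  fun i j => W k i j + if i ∈ J k ∧ j ∈ J k ∪ bdry (J k) then ε else 0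
section Aux
variable {n : ℕ}

lemma mem_bdry {J : Finset (Fin n)} {t : Fin n} :
    t ∈ bdry J ↔ t ∉ J ∧ ∃ s ∈ J, ((s : ℕ) = (t : ℕ) + 1 ∨ (t : ℕ) = (s : ℕ) + 1) := by
  simp [bdry]

lemma exists_blockMin {J : Finset (Fin n)} (h : J.Nonempty) :
    ∃ s ∈ J, (s : ℕ) = blockMin J := by
  obtain ⟨a, ha⟩ := h
  exact Nat.sInf_mem (⟨(a : ℕ), a, ha, rfl⟩ : {t : ℕ | ∃ s ∈ J, (s : ℕ) = t}.Nonempty)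

lemma blockMin_le {J : Finset (Fin n)} {s : Fin n} (hs : s ∈ J) : blockMin J ≤ (s : ℕ) :=
  Nat.sInf_le ⟨s, hs, rfl⟩

lemma exists_blockMax {J : Finset (Fin n)} (h : J.Nonempty) :
    ∃ s ∈ J, (s : ℕ) = blockMax J := by
  obtain ⟨s, hs, hv⟩ := Finset.exists_mem_eq_sup J h (fun t => (t : ℕ))
  exact ⟨s, hs, hv.symm⟩

lemma le_blockMax {J : Finset (Fin n)} {s : Fin n} (hs : s ∈ J) : (s : ℕ) ≤ blockMax J :=
  Finset.le_sup hs

lemma blockMin_le_blockMax {J : Finset (Fin n)} (h : J.Nonempty) :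
    blockMin J ≤ blockMax J := by
  obtain ⟨s, hs, hv⟩ := exists_blockMin h
  exact hv ▸ le_blockMax hs

lemma blockMax_lt {J : Finset (Fin n)} (h : J.Nonempty) : blockMax J < n := by
  obtain ⟨s, hs, hv⟩ := exists_blockMax h
  exact hv ▸ s.isLt

lemma mem_interval_iff {J : Finset (Fin n)} (h : IsIntervalBlock J) {t : Fin n} :
    t ∈ J ↔ blockMin J ≤ (t : ℕ) ∧ (t : ℕ) ≤ blockMax J := by
  constructor
  · exact fun ht => ⟨blockMin_le ht, le_blockMax ht⟩
  · rintro ⟨h1, h2⟩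
    obtain ⟨a, ha, hav⟩ := exists_blockMin h.1
    obtain ⟨b, hb, hbv⟩ := exists_blockMax h.1
    exact h.2 a ha b hb t (by rw [Fin.le_def]; omega) (by rw [Fin.le_def]; omega)

lemma mem_bdry_interval {J : Finset (Fin n)} (h : IsIntervalBlock J) {t : Fin n} :
    t ∈ bdry J ↔ ((t : ℕ) + 1 = blockMin J ∨ (t : ℕ) = blockMax J + 1) := by
  rw [mem_bdry]
  constructor
  · rintro ⟨htJ, s, hs, hadj⟩
    have hsmin := blockMin_le hs
    have hsmax := le_blockMax hs
    have hnot : ¬ (blockMin J ≤ (t : ℕ) ∧ (t : ℕ) ≤ blockMax J) := by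
      intro hc; exact htJ ((mem_interval_iff h).2 hc)
    omega
  · intro hc
    obtain ⟨a, ha, hav⟩ := exists_blockMin h.1
    obtain ⟨b, hb, hbv⟩ := exists_blockMax h.1
    have hmm := blockMin_le_blockMax h.1
    constructor
    · intro htJ
      have h1 := blockMin_le htJ
      have h2 := le_blockMax htJ
      omega
    · rcases hc with hc | hc
      · exact ⟨a, ha, by omega⟩
      · exact ⟨b, hb, by omega⟩

lemma card_bdry_le {J : Finset (Fin n)} (h : IsIntervalBlock J) : (bdry J).card ≤ 2 := by
  classical
  have hsub : bdry J ⊆ (Finset.univ.filter fun t : Fin n => (t : ℕ) + 1 = blockMin J) ∪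
      (Finset.univ.filter fun t : Fin n => (t : ℕ) = blockMax J + 1) := by
    intro t ht
    rcases (mem_bdry_interval h).1 ht with hc | hc
    · exact Finset.mem_union_left _ (Finset.mem_filter.2 ⟨Finset.mem_univ _, hc⟩)
    · exact Finset.mem_union_right _ (Finset.mem_filter.2 ⟨Finset.mem_univ _, hc⟩)
  have h1 : (Finset.univ.filter fun t : Fin n => (t : ℕ) + 1 = blockMin J).card ≤ 1 := by
    apply Finset.card_le_one.2
    intro a ha b hb
    simp only [Finset.mem_filter] at ha hb
    exact Fin.ext (by omega)
  have h2 : (Finset.univ.filter fun t : Fin n => (t : ℕ) = blockMax J + 1).card ≤ 1 := by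
    apply Finset.card_le_one.2
    intro a ha b hb
    simp only [Finset.mem_filter] at ha hb
    exact Fin.ext (by omega)
  calc (bdry J).card ≤ _ := Finset.card_le_card hsub
    _ ≤ _ + _ := Finset.card_union_le _ _
    _ ≤ 2 := by omega

end Aux
section Aux2
variable {n : ℕ} (J : ℕ → Finset (Fin n)) (W : ℕ → Matrix (Fin n) (Fin n) ℝ) (ε : ℝ)

lemma mem_descList {m c : ℕ} : c ∈ descList m ↔ 1 ≤ c ∧ c ≤ m := by
  simp only [descList, List.mem_map, List.mem_range]
  constructor
  · rintro ⟨i, hi, rfl⟩; omega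
  · intro h; exact ⟨m - c, by omega, by omega⟩

lemma nodup_descList {m : ℕ} : (descList m).Nodup := by
  refine List.Nodup.map_on ?_ List.nodup_range
  intro x hx y hy h
  simp only [List.mem_range] at hx hy
  omega

lemma hatW_nonneg {k : ℕ} (hW : ∀ i j, 0 ≤ W k i j) (hε : 0 ≤ ε) (i j : Fin n) :
    0 ≤ hatW J W ε k i j := by
  unfold hatW
  have := hW i j
  split <;> simp <;> linarith

lemma hatW_id {k : ℕ} (hG : GibbsBlock (J k) (W k)) {i : Fin n} (hi : i ∉ J k) (j : Fin n) :
    hatW J W ε k i j = if i = j then 1 else 0 := by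
  unfold hatW
  rw [hG.2.1 i hi j]
  simp [hi]

lemma hatW_supp {k : ℕ} (hG : GibbsBlock (J k) (W k)) {i : Fin n} (hi : i ∈ J k) {j : Fin n}
    (hj : j ∉ J k ∪ bdry (J k)) : hatW J W ε k i j = 0 := by
  unfold hatW
  rw [hG.2.2 i hi j (fun h => hj (Finset.mem_union_right _ h)), if_neg (fun h => hj h.2),
    add_zero]

/-- product of identity-rows is identity row -/
lemma prod_row_id (l : List ℕ) (hG : ∀ c ∈ l, GibbsBlock (J c) (W c)) (i : Fin n)
    (h : ∀ c ∈ l, i ∉ J c) (j : Fin n) :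
    ((l.map (hatW J W ε)).prod) i j = if i = j then 1 else 0 := by
  induction l with
  | nil => simp [Matrix.one_apply]
  | cons d l ih =>
    have hrow := hatW_id J W ε (hG d (by simp)) (h d (by simp))
    simp only [List.map_cons, List.prod_cons, Matrix.mul_apply]
    rw [Finset.sum_congr rfl (fun t _ => by rw [hrow t])]
    simp only [ite_mul, one_mul, zero_mul]
    rw [Finset.sum_ite_eq]
    simp only [Finset.mem_univ, if_true]
    exact ih (fun c hc => hG c (by simp [hc])) (fun c hc => h c (by simp [hc]))

/-- if `i ∈ J c`, `c` occurs once in `l`, and the support of row `i` of `Ŵ^{J_c}` avoids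
all other blocks of `l`, then row `i` of the product is row `i` of `Ŵ^{J_c}`. -/
lemma prod_row_single (l : List ℕ) (hnd : l.Nodup) (hG : ∀ c ∈ l, GibbsBlock (J c) (W c))
    (c : ℕ) (hc : c ∈ l) (i : Fin n) (hi : i ∈ J c)
    (H : ∀ c' ∈ l, c' ≠ c → ∀ t : Fin n, t ∈ J c ∪ bdry (J c) → t ∉ J c') (j : Fin n) :
    ((l.map (hatW J W ε)).prod) i j = hatW J W ε c i j := by
  induction l with
  | nil => simp at hc
  | cons d l ih =>
    simp only [List.map_cons, List.prod_cons, Matrix.mul_apply]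
    by_cases hdc : d = c
    · subst hdc
      have hdl : d ∉ l := (List.nodup_cons.1 hnd).1
      have hterm : ∀ t : Fin n, hatW J W ε d i t * ((l.map (hatW J W ε)).prod) t j
          = hatW J W ε d i t * (if t = j then 1 else 0) := by
        intro t
        by_cases h0 : hatW J W ε d i t = 0
        · rw [h0, zero_mul, zero_mul]
        · have htsupp : t ∈ J d ∪ bdry (J d) := by
            by_contra hns
            exact h0 (hatW_supp J W ε (hG d (by simp)) hi hns)
          have : ∀ c' ∈ l, t ∉ J c' := fun c' hc' =>
            H c' (by simp [hc']) (fun h => hdl (h ▸ hc')) t htsupp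
          rw [prod_row_id J W ε l (fun c' hc' => hG c' (by simp [hc'])) t this j]
      rw [Finset.sum_congr rfl (fun t _ => hterm t)]
      simp only [mul_ite, mul_one, mul_zero]
      rw [Finset.sum_ite_eq']
      simp
    · have hrow := hatW_id J W ε (hG d (by simp))
        (H d (by simp) hdc i (Finset.mem_union_left _ hi))
      rw [Finset.sum_congr rfl (fun t _ => by rw [hrow t])]
      simp only [ite_mul, one_mul, zero_mul]
      rw [Finset.sum_ite_eq]
      simp only [Finset.mem_univ, if_true]
      exact ih ((List.nodup_cons.1 hnd).2) (fun c' hc' => hG c' (by simp [hc']))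
        ((List.mem_cons.1 hc).resolve_left (fun h => hdc h.symm))
        (fun c' hc' hne t ht => H c' (by simp [hc']) hne t ht)

lemma prod_nonneg_entries (l : List ℕ) (hG : ∀ c ∈ l, ∀ i j : Fin n, 0 ≤ W c i j)
    (hε : 0 ≤ ε) (i j : Fin n) : 0 ≤ ((l.map (hatW J W ε)).prod) i j := by
  induction l generalizing i with
  | nil => simp [Matrix.one_apply]; split <;> norm_num
  | cons d l ih =>
    simp only [List.map_cons, List.prod_cons, Matrix.mul_apply]
    apply Finset.sum_nonneg
    intro t _
    exact mul_nonneg (hatW_nonneg J W ε (hG d (by simp)) hε i t)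
      (ih (fun c hc => hG c (by simp [hc])) t)

end Aux2
section Aux3
variable {n m : ℕ} {J : ℕ → Finset (Fin n)}

lemma interval_of_B1 (hB1 : CondB1 m J) {k : ℕ} (hk : k ∈ Finset.Icc 1 m) :
    IsIntervalBlock (J k) := hB1.1 k hk

lemma range_of_mem_union (hB1 : CondB1 m J) {a : ℕ} (ha : a ∈ Finset.Icc 1 m) {t : Fin n}
    (ht : t ∈ J a ∪ bdry (J a)) :
    blockMin (J a) ≤ (t : ℕ) + 1 ∧ (t : ℕ) ≤ blockMax (J a) + 1 := by
  have hint := hB1.1 a ha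
  have hmm := blockMin_le_blockMax hint.1
  rcases Finset.mem_union.1 ht with h | h
  · have := (mem_interval_iff hint).1 h
    omega
  · have := (mem_bdry_interval hint).1 h
    omega

/-- two distinct blocks of the same parity are separated from each other's closure -/
lemma sep_parity (hB1 : CondB1 m J) (hB2 : CondB2 m J) {a b : ℕ}
    (ha : a ∈ Finset.Icc 1 m) (hb : b ∈ Finset.Icc 1 m) (hpar : a % 2 = b % 2)
    (hne : b ≠ a) {t : Fin n} (ht : t ∈ J a ∪ bdry (J a)) : t ∉ J b := by
  simp only [Finset.mem_Icc] at ha hb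
  have hrange := range_of_mem_union hB1 (Finset.mem_Icc.2 ha) ht
  intro htb
  have hbint := hB1.1 b (Finset.mem_Icc.2 hb)
  have htb' := (mem_interval_iff hbint).1 htb
  rcases Nat.lt_or_ge a b with hlt | hge
  · have h2 : a + 2 ≤ b := by omega
    have := hB2 a b (by omega) h2 (by omega)
    omega
  · have hlt : b < a := by omega
    have h2 : b + 2 ≤ a := by omega
    have := hB2 b a (by omega) h2 (by omega)
    omega

lemma blockMin_one (hn : 1 ≤ n) (hm : 1 ≤ m) (hB1 : CondB1 m J)
    (hcover : ∀ i : Fin n, ∃ k ∈ Finset.Icc 1 m, i ∈ J k) : blockMin (J 1) = 0 := by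
  obtain ⟨l, hl, hz⟩ := hcover ⟨0, hn⟩
  simp only [Finset.mem_Icc] at hl
  have h1 : blockMin (J l) ≤ 0 := blockMin_le hz
  rcases Nat.eq_or_lt_of_le hl.1 with h | h
  · rw [← h] at h1; omega
  · have := (hB1.2 1 l le_rfl h hl.2).1
    omega

lemma blockMax_m (hn : 1 ≤ n) (hm : 1 ≤ m) (hB1 : CondB1 m J)
    (hcover : ∀ i : Fin n, ∃ k ∈ Finset.Icc 1 m, i ∈ J k) : blockMax (J m) = n - 1 := by
  obtain ⟨l, hl, hz⟩ := hcover ⟨n - 1, by omega⟩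
  simp only [Finset.mem_Icc] at hl
  have h1 : n - 1 ≤ blockMax (J l) := le_blockMax hz
  have h2 : blockMax (J m) < n := blockMax_lt (hB1.1 m (by simp [hm])).1
  rcases Nat.eq_or_lt_of_le hl.2 with h | h
  · rw [h] at h1; omega
  · have := (hB1.2 l m hl.1 h le_rfl).2
    omega

lemma blockMin_pos (hB1 : CondB1 m J) {k : ℕ} (hk2 : 2 ≤ k) (hkm : k ≤ m) :
    1 ≤ blockMin (J k) := by
  have := (hB1.2 1 k le_rfl (by omega) hkm).1
  omega

lemma blockMax_lt_pred (hn : 1 ≤ n) (hm : 1 ≤ m) (hB1 : CondB1 m J)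
    (hcover : ∀ i : Fin n, ∃ k ∈ Finset.Icc 1 m, i ∈ J k) {k : ℕ} (hk1 : 1 ≤ k)
    (hkm : k < m) : blockMax (J k) + 1 < n := by
  have h1 := (hB1.2 k m hk1 hkm le_rfl).2
  have h2 := blockMax_m hn hm hB1 hcover
  omega

lemma left_nb (hB1 : CondB1 m J) (hB2 : CondB2 m J)
    (hcover : ∀ i : Fin n, ∃ k ∈ Finset.Icc 1 m, i ∈ J k) {k : ℕ} (hk2 : 2 ≤ k)
    (hkm : k ≤ m) {p : Fin n} (hp : (p : ℕ) + 1 = blockMin (J k)) :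
    p ∈ J (k - 1) ∧ ∀ l ∈ Finset.Icc 1 m, l ≠ k - 1 → p ∉ J l := by
  have hnot : ∀ l ∈ Finset.Icc 1 m, l ≠ k - 1 → p ∉ J l := by
    intro l hl hne hpl
    simp only [Finset.mem_Icc] at hl
    have hlint := hB1.1 l (Finset.mem_Icc.2 hl)
    have hmem := (mem_interval_iff hlint).1 hpl
    rcases Nat.lt_or_ge l k with hlt | hge
    · have h2 : l + 2 ≤ k := by omega
      have := hB2 l k (by omega) h2 hkm
      omega
    · rcases Nat.eq_or_lt_of_le hge with rfl | h
      · omega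
      · have := (hB1.2 k l (by omega) h hl.2).1
        omega
  obtain ⟨l, hl, hzl⟩ := hcover p
  have hlk : l = k - 1 := by
    by_contra hne
    exact hnot l hl hne hzl
  exact ⟨hlk ▸ hzl, hnot⟩

lemma right_nb (hB1 : CondB1 m J) (hB2 : CondB2 m J)
    (hcover : ∀ i : Fin n, ∃ k ∈ Finset.Icc 1 m, i ∈ J k) {k : ℕ} (hk1 : 1 ≤ k)
    (hkm : k < m) {p : Fin n} (hp : (p : ℕ) = blockMax (J k) + 1) :
    p ∈ J (k + 1) ∧ ∀ l ∈ Finset.Icc 1 m, l ≠ k + 1 → p ∉ J l := by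
  have hnot : ∀ l ∈ Finset.Icc 1 m, l ≠ k + 1 → p ∉ J l := by
    intro l hl hne hpl
    simp only [Finset.mem_Icc] at hl
    have hlint := hB1.1 l (Finset.mem_Icc.2 hl)
    have hmem := (mem_interval_iff hlint).1 hpl
    rcases Nat.lt_or_ge k l with hlt | hge
    · have h2 : k + 2 ≤ l := by omega
      have := hB2 k l hk1 h2 hl.2
      omega
    · rcases Nat.eq_or_lt_of_le hge with rfl | h
      · omega
      · have := (hB1.2 l k hl.1 h (by omega)).2
        omega
  obtain ⟨l, hl, hzl⟩ := hcover p
  have hlk : l = k + 1 := by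
    by_contra hne
    exact hnot l hl hne hzl
  exact ⟨hlk ▸ hzl, hnot⟩

end Aux3
section Aux4
variable {n m : ℕ} {J : ℕ → Finset (Fin n)} {W : ℕ → Matrix (Fin n) (Fin n) ℝ}

lemma entryZ_eval (A : Matrix (Fin n) (Fin n) ℝ) (i : Fin n) (z : ℤ) (p : Fin n)
    (hp : (p : ℤ) = z) : entryZ A i z = A i p := by
  have hi := i.isLt
  have hpn := p.isLt
  unfold entryZ
  rw [dif_pos (by constructor <;> omega), dif_pos (by constructor <;> omega)]
  exact congrArg₂ A (Fin.ext (by simp only [Fin.val_mk]; omega)) (Fin.ext (by simp only [Fin.val_mk]; omega))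

lemma entryZ_bounds (A : Matrix (Fin n) (Fin n) ℝ) (hA : ∀ i j, 0 ≤ A i j ∧ A i j ≤ 1)
    (i j : ℤ) : 0 ≤ entryZ A i j ∧ entryZ A i j ≤ 1 := by
  unfold entryZ
  split
  · split
    · exact hA _ _
    · norm_num
  · norm_num

/-- sum of row `i` of `W k` over the boundary equals `eL + eR` -/
lemma bsum_eq (hn : 1 ≤ n) (hm : 1 ≤ m) (hB1 : CondB1 m J)
    (hcover : ∀ i : Fin n, ∃ k ∈ Finset.Icc 1 m, i ∈ J k) {k : ℕ}
    (hk : k ∈ Finset.Icc 1 m) (i : Fin n) :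
    ∑ t ∈ bdry (J k), W k i t = eL m J W k i + eR m J W k i := by
  simp only [Finset.mem_Icc] at hk
  have hint := hB1.1 k (Finset.mem_Icc.2 hk)
  have hmm := blockMin_le_blockMax hint.1
  have hmaxlt := blockMax_lt hint.1
  by_cases hk1 : k = 1
  · by_cases hkm : k = m
    · -- bdry empty
      have hmin0 : blockMin (J k) = 0 := hk1 ▸ blockMin_one hn hm hB1 hcover
      have hmaxn : blockMax (J k) = n - 1 := hkm ▸ blockMax_m hn hm hB1 hcover
      have hbe : bdry (J k) = ∅ := by
        apply Finset.eq_empty_of_forall_notMem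
        intro t ht
        have := (mem_bdry_interval hint).1 ht
        have := t.isLt
        omega
      rw [hbe]
      have h1m : (1 : ℕ) = m := by omega
      simp [eL, eR, hk1, ← h1m]
    · -- k = 1 < m : bdry = {pR}
      have hmin0 : blockMin (J k) = 0 := hk1 ▸ blockMin_one hn hm hB1 hcover
      have hprlt : blockMax (J k) + 1 < n :=
        blockMax_lt_pred hn hm hB1 hcover hk.1 (by omega)
      set pR : Fin n := ⟨blockMax (J k) + 1, hprlt⟩ with hpR
      have hbe : bdry (J k) = {pR} := by
        apply Finset.ext
        intro t
        rw [mem_bdry_interval hint, Finset.mem_singleton]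
        constructor
        · intro h
          exact Fin.ext (by simp only [hpR]; omega)
        · intro h
          right
          rw [h]
      rw [hbe, Finset.sum_singleton]
      have heR : eR m J W k i = W k i pR := by
        rw [eR, if_neg hkm]
        exact entryZ_eval _ _ _ pR (by simp [hpR])
      rw [heR, eL, if_pos hk1, zero_add]
  · by_cases hkm : k = m
    · -- 1 < k = m : bdry = {pL}
      have hmaxn : blockMax (J k) = n - 1 := hkm ▸ blockMax_m hn hm hB1 hcover
      have hminpos : 1 ≤ blockMin (J k) := blockMin_pos hB1 (by omega) hk.2
      set pL : Fin n := ⟨blockMin (J k) - 1, by omega⟩ with hpL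
      have hbe : bdry (J k) = {pL} := by
        apply Finset.ext
        intro t
        rw [mem_bdry_interval hint, Finset.mem_singleton]
        have := t.isLt
        constructor
        · intro h
          exact Fin.ext (by simp only [hpL]; omega)
        · intro h
          left
          rw [h]
          simp only [hpL]
          omega
      rw [hbe, Finset.sum_singleton]
      have heL : eL m J W k i = W k i pL := by
        rw [eL, if_neg hk1]
        exact entryZ_eval _ _ _ pL (by simp only [hpL]; push_cast; omega)
      rw [heL, eR, if_pos hkm, add_zero]
    · -- 1 < k < m : bdry = {pL, pR}
      have hminpos : 1 ≤ blockMin (J k) := blockMin_pos hB1 (by omega) hk.2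
      have hprlt : blockMax (J k) + 1 < n :=
        blockMax_lt_pred hn hm hB1 hcover hk.1 (by omega)
      set pL : Fin n := ⟨blockMin (J k) - 1, by omega⟩ with hpL
      set pR : Fin n := ⟨blockMax (J k) + 1, hprlt⟩ with hpR
      have hne : pL ≠ pR := by
        intro h
        have := congrArg Fin.val h
        simp only [hpL, hpR] at this
        omega
      have hbe : bdry (J k) = {pL, pR} := by
        apply Finset.ext
        intro t
        rw [mem_bdry_interval hint, Finset.mem_insert, Finset.mem_singleton]
        constructor
        · rintro (h | h)
          · left; exact Fin.ext (by simp only [hpL]; omega)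
          · right; exact Fin.ext (by simp only [hpR]; omega)
        · rintro (h | h)
          · left; rw [h]; simp only [hpL]; omega
          · right; rw [h]
      rw [hbe, Finset.sum_pair hne]
      have heL : eL m J W k i = W k i pL := by
        rw [eL, if_neg hk1]
        exact entryZ_eval _ _ _ pL (by simp only [hpL]; push_cast; omega)
      have heR : eR m J W k i = W k i pR := by
        rw [eR, if_neg hkm]
        exact entryZ_eval _ _ _ pR (by simp [hpR])
      rw [heL, heR]

end Aux4
section Aux5
variable {n m : ℕ} {J : ℕ → Finset (Fin n)} {W : ℕ → Matrix (Fin n) (Fin n) ℝ}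

lemma eL_bounds (hG : ∀ i j, 0 ≤ W k i j ∧ W k i j ≤ 1) (i : Fin n) :
    0 ≤ eL m J W k i ∧ eL m J W k i ≤ 1 := by
  unfold eL
  split
  · norm_num
  · exact entryZ_bounds _ hG _ _

lemma eR_bounds (hG : ∀ i j, 0 ≤ W k i j ∧ W k i j ≤ 1) (i : Fin n) :
    0 ≤ eR m J W k i ∧ eR m J W k i ≤ 1 := by
  unfold eR
  split
  · norm_num
  · exact entryZ_bounds _ hG _ _

lemma mem_Jminus {k : ℕ} {i : Fin n} :
    i ∈ Jminus m J k ↔ ∃ l ∈ Finset.Icc 1 m, l ≠ k ∧ i ∈ J l := by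
  simp only [Jminus, Finset.mem_biUnion, Finset.mem_erase]
  constructor
  · rintro ⟨l, ⟨h1, h2⟩, h3⟩; exact ⟨l, h2, h1, h3⟩
  · rintro ⟨l, h2, h1, h3⟩; exact ⟨l, ⟨h1, h2⟩, h3⟩

lemma hatW_rowsum (J : ℕ → Finset (Fin n)) (W : ℕ → Matrix (Fin n) (Fin n) ℝ) (ε : ℝ)
    {k : ℕ} (hG : GibbsBlock (J k) (W k)) {i : Fin n} (hi : i ∈ J k) :
    ∑ j, hatW J W ε k i j
      = (∑ t ∈ bdry (J k), W k i t) + ε * ((J k ∪ bdry (J k)).card : ℝ) := by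
  unfold hatW
  rw [Finset.sum_add_distrib]
  congr 1
  · exact (Finset.sum_subset (Finset.subset_univ (bdry (J k)))
      (fun x _ hx => hG.2.2 i hi x hx)).symm
  · rw [Finset.sum_congr rfl (fun j _ => by
      rw [show (if i ∈ J k ∧ j ∈ J k ∪ bdry (J k) then ε else 0)
        = if j ∈ J k ∪ bdry (J k) then ε else 0 from by simp [hi]])]
    rw [Finset.sum_ite_mem, Finset.univ_inter, Finset.sum_const, nsmul_eq_mul, mul_comm]

lemma rs_mul (A B : Matrix (Fin n) (Fin n) ℝ) (i : Fin n) :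
    ∑ j, (A * B) i j = ∑ t, A i t * ∑ j, B t j := by
  simp only [Matrix.mul_apply, Finset.mul_sum]
  exact Finset.sum_comm

lemma mem_parityList {m r x : ℕ} :
    x ∈ ((descList m).filter fun l => l % 2 = r) ↔ (1 ≤ x ∧ x ≤ m) ∧ x % 2 = r := by
  simp [List.mem_filter, mem_descList]

lemma nodup_parityList {m r : ℕ} : ((descList m).filter fun l => l % 2 = r).Nodup :=
  (nodup_descList).filter _

lemma row_parity_single (hB1 : CondB1 m J) (hB2 : CondB2 m J)
    (hblock : ∀ k ∈ Finset.Icc 1 m, GibbsBlock (J k) (W k)) (ε : ℝ) (r c : ℕ)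
    (hc : c ∈ Finset.Icc 1 m) (hcr : c % 2 = r) {i : Fin n} (hi : i ∈ J c) (j : Fin n) :
    ((((descList m).filter fun l => l % 2 = r).map (hatW J W ε)).prod) i j
      = hatW J W ε c i j := by
  apply prod_row_single J W ε _ nodup_parityList
    (fun c' hc' => hblock c' (by
      have := mem_parityList.1 hc'
      exact Finset.mem_Icc.2 this.1))
    c (mem_parityList.2 ⟨Finset.mem_Icc.1 hc, hcr⟩) i hi
  intro c' hc' hne t ht
  have hc'' := mem_parityList.1 hc'
  exact sep_parity hB1 hB2 hc (Finset.mem_Icc.2 hc''.1) (by omega) hne ht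

lemma row_parity_id (hblock : ∀ k ∈ Finset.Icc 1 m, GibbsBlock (J k) (W k)) (ε : ℝ) (r : ℕ)
    {i : Fin n} (hi : ∀ c ∈ Finset.Icc 1 m, c % 2 = r → i ∉ J c) (j : Fin n) :
    ((((descList m).filter fun l => l % 2 = r).map (hatW J W ε)).prod) i j
      = if i = j then 1 else 0 := by
  apply prod_row_id J W ε _
    (fun c' hc' => hblock c' (Finset.mem_Icc.2 (mem_parityList.1 hc').1))
  intro c hc
  have := mem_parityList.1 hc
  exact hi c (Finset.mem_Icc.2 this.1) this.2

end Aux5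
theorem stmt6 {n m : ℕ} (hn : 1 ≤ n) (hm : 1 ≤ m) (hmodd : m % 2 = 1)
    (J : ℕ → Finset (Fin n)) (W : ℕ → Matrix (Fin n) (Fin n) ℝ)
    (hcover : ∀ i : Fin n, ∃ k ∈ Finset.Icc 1 m, i ∈ J k)
    (hB1 : CondB1 m J) (hB2 : CondB2 m J)
    (hblock : ∀ k ∈ Finset.Icc 1 m, GibbsBlock (J k) (W k))
    (ε : ℝ) (hε0 : 0 ≤ ε) (hε1 : ε < 1)
    (lam Wbar : ℝ) (L : ℕ)
    (hlam : lam = sSup {x : ℝ | ∃ k ∈ Finset.Icc 1 m, ∃ i : Fin n,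
      i ∉ Jminus m J k ∧ x = eL m J W k i + eR m J W k i})
    (hWbar : Wbar = sSup {x : ℝ | ∃ k ∈ Finset.Icc 1 m, ∃ i ∈ J k,
      x = ∑ j ∈ bdry (J k), W k i j})
    (hL : L = (Finset.Icc 1 m).sup fun k => (J k).card) :
    (∀ k ∈ Finset.Icc 1 m, k % 2 = 0 → ∀ i : Fin n, i ∉ Jminus m J k →
      ∑ j, (((((descList m).filter fun l => l % 2 = 0).map (hatW J W ε)).prod) *
          ((((descList m).filter fun l => l % 2 = 1).map (hatW J W ε)).prod)) i j ≤
        lam ^ 2 + ε * (lam * ((L : ℝ) + 4) + ε * ((L : ℝ) + 2) ^ 2 + (L : ℝ) * max 1 Wbar)) ∧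
    (∀ k ∈ Finset.Icc 1 m, k % 2 = 1 → ∀ i : Fin n, i ∉ Jminus m J k →
      ∑ j, (((((descList m).filter fun l => l % 2 = 0).map (hatW J W ε)).prod) *
          ((((descList m).filter fun l => l % 2 = 1).map (hatW J W ε)).prod)) i j ≤
        lam + ε * ((L : ℝ) + 2)) ∧
    (∀ k ∈ Finset.Icc 1 m, k % 2 = 0 → ∀ i ∈ J k, i ∈ Jminus m J k →
      ∑ j, (((((descList m).filter fun l => l % 2 = 0).map (hatW J W ε)).prod) *
          ((((descList m).filter fun l => l % 2 = 1).map (hatW J W ε)).prod)) i j ≤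
        lam * Wbar + ε * (Wbar * ((L : ℝ) + 2) + 2 * lam + ε * ((L : ℝ) + 2) ^ 2 +
          (L : ℝ) * max 1 Wbar)) := by
  classical
  set PE := (((descList m).filter fun l => l % 2 = 0).map (hatW J W ε)).prod with hPE
  set PO := (((descList m).filter fun l => l % 2 = 1).map (hatW J W ε)).prod with hPO
  have hlam_ge : ∀ k ∈ Finset.Icc 1 m, ∀ i : Fin n, i ∉ Jminus m J k →
      eL m J W k i + eR m J W k i ≤ lam := by
    intro k hk i hi
    rw [hlam]
    apply le_csSup
    · refine ⟨2, ?_⟩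
      rintro x ⟨k', hk', i', hi', rfl⟩
      have h1 : 0 ≤ eL m J W k' i' ∧ eL m J W k' i' ≤ 1 :=
        eL_bounds (hblock k' hk').1 i'
      have h2 : 0 ≤ eR m J W k' i' ∧ eR m J W k' i' ≤ 1 :=
        eR_bounds (hblock k' hk').1 i'
      linarith
    · exact ⟨k, hk, i, hi, rfl⟩
  have hWbar_ge : ∀ k ∈ Finset.Icc 1 m, ∀ i ∈ J k,
      ∑ t ∈ bdry (J k), W k i t ≤ Wbar := by
    intro k hk i hi
    rw [hWbar]
    apply le_csSup
    · refine ⟨2, ?_⟩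
      rintro x ⟨k', hk', i', hi', rfl⟩
      have hb : ∑ t ∈ bdry (J k'), W k' i' t ≤ ((bdry (J k')).card : ℝ) * 1 := by
        have := Finset.sum_le_card_nsmul (bdry (J k')) (fun t => W k' i' t) 1
          (fun x _ => ((hblock k' hk').1 i' x).2)
        simpa [nsmul_eq_mul] using this
      have hc : ((bdry (J k')).card : ℝ) ≤ 2 := by
        exact_mod_cast card_bdry_le (hB1.1 k' hk')
      linarith
    · exact ⟨k, hk, i, hi, rfl⟩
  have hcardLe : ∀ k ∈ Finset.Icc 1 m, ((J k ∪ bdry (J k)).card : ℝ) ≤ (L : ℝ) + 2 := by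
    intro k hk
    have h1 := Finset.card_union_le (J k) (bdry (J k))
    have h2 := card_bdry_le (hB1.1 k hk)
    have h3 : (J k).card ≤ L := by rw [hL]; exact Finset.le_sup (f := fun k => (J k).card) hk
    have h4 : (J k ∪ bdry (J k)).card ≤ L + 2 := by omega
    exact_mod_cast h4
  have hg_mem : ∀ c ∈ Finset.Icc 1 m, c % 2 = 1 → ∀ t ∈ J c,
      ∑ j, PO t j = (∑ s ∈ bdry (J c), W c t s)
        + ε * ((J c ∪ bdry (J c)).card : ℝ) := by
    intro c hc hc1 t ht
    rw [hPO]
    rw [Finset.sum_congr rfl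
      (fun j _ => row_parity_single hB1 hB2 hblock ε 1 c hc hc1 ht j)]
    exact hatW_rowsum J W ε (hblock c hc) ht
  have hg_id : ∀ t : Fin n, (∀ c ∈ Finset.Icc 1 m, c % 2 = 1 → t ∉ J c) →
      ∑ j, PO t j = 1 := by
    intro t h
    rw [hPO]
    rw [Finset.sum_congr rfl (fun j _ => row_parity_id hblock ε 1 h j)]
    simp
  have hgB : ∀ t : Fin n, ∑ j, PO t j ≤ max 1 Wbar + ε * ((L:ℝ)+2) := by
    intro t
    have hεL : 0 ≤ ε * ((L:ℝ)+2) := by positivity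
    by_cases hex : ∃ c ∈ Finset.Icc 1 m, c % 2 = 1 ∧ t ∈ J c
    · obtain ⟨c, hc, hc1, ht⟩ := hex
      rw [hg_mem c hc hc1 t ht]
      have h1 := hWbar_ge c hc t ht
      have h2 : ε * ((J c ∪ bdry (J c)).card : ℝ) ≤ ε * ((L:ℝ)+2) :=
        mul_le_mul_of_nonneg_left (hcardLe c hc) hε0
      have h3 : Wbar ≤ max 1 Wbar := le_max_right _ _
      linarith
    · push_neg at hex
      rw [hg_id t hex]
      have h3 : (1:ℝ) ≤ max 1 Wbar := le_max_left _ _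
      linarith
  have hg0 : ∀ t : Fin n, (0:ℝ) ≤ ∑ j, PO t j := by
    intro t
    rw [hPO]
    apply Finset.sum_nonneg
    intro j _
    exact prod_nonneg_entries J W ε _
      (fun c hc i' j' =>
        ((hblock c (Finset.mem_Icc.2 (mem_parityList.1 hc).1)).1 i' j').1) hε0 t j
  have hiJk_of : ∀ k ∈ Finset.Icc 1 m, ∀ i : Fin n, i ∉ Jminus m J k → i ∈ J k := by
    intro k hk i hi
    obtain ⟨l, hl, hil⟩ := hcover i
    rcases eq_or_ne l k with rfl | hne
    · exact hil
    · exact absurd (mem_Jminus.2 ⟨l, hl, hne, hil⟩) hi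
  have keyEven : ∀ k ∈ Finset.Icc 1 m, k % 2 = 0 → ∀ i ∈ J k, ∀ X : ℝ,
      (∑ t ∈ bdry (J k), W k i t) ≤ X →
      ∑ j, (PE * PO) i j ≤ (X + 2*ε) * (lam + ε*((L:ℝ)+2))
        + (L:ℝ) * (ε * (max 1 Wbar + ε*((L:ℝ)+2))) := by
    intro k hk hk0 i hiJ X hX
    have hk' := Finset.mem_Icc.1 hk
    have hk2 : 2 ≤ k := by omega
    have hkm : k < m := by omega
    have hlam0 : 0 ≤ lam := by
      have hminpos : 1 ≤ blockMin (J k) := blockMin_pos hB1 hk2 hk'.2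
      have hmm := blockMin_le_blockMax (hB1.1 k hk).1
      have hmax := blockMax_lt (hB1.1 k hk).1
      have hpv : ((⟨blockMin (J k) - 1, by omega⟩ : Fin n) : ℕ) + 1 = blockMin (J k) := by
        simp only [Fin.val_mk]; omega
      obtain ⟨hpm, hun⟩ := left_nb hB1 hB2 hcover hk2 hk'.2 hpv
      have hk1m : k - 1 ∈ Finset.Icc 1 m := Finset.mem_Icc.2 ⟨by omega, by omega⟩
      have hnm : (⟨blockMin (J k) - 1, by omega⟩ : Fin n) ∉ Jminus m J (k-1) := by
        intro hcon
        obtain ⟨l, hl, hlne, hpl⟩ := mem_Jminus.1 hcon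
        exact hun l hl hlne hpl
      have h1 : 0 ≤ eL m J W (k-1) (⟨blockMin (J k) - 1, by omega⟩ : Fin n) ∧
          eL m J W (k-1) (⟨blockMin (J k) - 1, by omega⟩ : Fin n) ≤ 1 :=
        eL_bounds (hblock (k-1) hk1m).1 _
      have h2 : 0 ≤ eR m J W (k-1) (⟨blockMin (J k) - 1, by omega⟩ : Fin n) ∧
          eR m J W (k-1) (⟨blockMin (J k) - 1, by omega⟩ : Fin n) ≤ 1 :=
        eR_bounds (hblock (k-1) hk1m).1 _
      have h3 := hlam_ge (k-1) hk1m (⟨blockMin (J k) - 1, by omega⟩ : Fin n) hnm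
      linarith [h1.1, h2.1]
    have hgL : ∀ t ∈ bdry (J k), ∑ j, PO t j ≤ lam + ε*((L:ℝ)+2) := by
      intro t ht
      rcases (mem_bdry_interval (hB1.1 k hk)).1 ht with hc | hc
      · obtain ⟨hpm, hun⟩ := left_nb hB1 hB2 hcover hk2 hk'.2 hc
        have hk1m : k - 1 ∈ Finset.Icc 1 m := Finset.mem_Icc.2 ⟨by omega, by omega⟩
        have hnm : t ∉ Jminus m J (k-1) := by
          intro hcon
          obtain ⟨l, hl, hlne, hpl⟩ := mem_Jminus.1 hcon
          exact hun l hl hlne hpl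
        rw [hg_mem (k-1) hk1m (by omega) t hpm, bsum_eq hn hm hB1 hcover hk1m t]
        have h1 := hlam_ge (k-1) hk1m t hnm
        have h2 : ε * ((J (k-1) ∪ bdry (J (k-1))).card : ℝ) ≤ ε * ((L:ℝ)+2) :=
          mul_le_mul_of_nonneg_left (hcardLe (k-1) hk1m) hε0
        linarith
      · obtain ⟨hpm, hun⟩ := right_nb hB1 hB2 hcover (by omega) hkm hc
        have hk1m : k + 1 ∈ Finset.Icc 1 m := Finset.mem_Icc.2 ⟨by omega, by omega⟩
        have hnm : t ∉ Jminus m J (k+1) := by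
          intro hcon
          obtain ⟨l, hl, hlne, hpl⟩ := mem_Jminus.1 hcon
          exact hun l hl hlne hpl
        rw [hg_mem (k+1) hk1m (by omega) t hpm, bsum_eq hn hm hB1 hcover hk1m t]
        have h1 := hlam_ge (k+1) hk1m t hnm
        have h2 : ε * ((J (k+1) ∪ bdry (J (k+1))).card : ℝ) ≤ ε * ((L:ℝ)+2) :=
          mul_le_mul_of_nonneg_left (hcardLe (k+1) hk1m) hε0
        linarith
    have hrs : ∑ j, (PE * PO) i j = ∑ t, hatW J W ε k i t * ∑ j, PO t j := by
      rw [rs_mul PE PO i]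
      refine Finset.sum_congr rfl (fun t _ => ?_)
      rw [hPE, row_parity_single hB1 hB2 hblock ε 0 k hk hk0 hiJ t]
    rw [hrs]
    have hvanish : ∀ t ∈ (Finset.univ : Finset (Fin n)), t ∉ J k ∪ bdry (J k) →
        hatW J W ε k i t * ∑ j, PO t j = 0 := fun t _ ht => by
      rw [hatW_supp J W ε (hblock k hk) hiJ ht, zero_mul]
    rw [← Finset.sum_subset (Finset.subset_univ _) hvanish]
    have hdisj : Disjoint (J k) (bdry (J k)) := by
      rw [Finset.disjoint_left]
      intro a ha hab
      exact (mem_bdry.1 hab).1 ha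
    rw [Finset.sum_union hdisj]
    have hbb : ∑ t ∈ bdry (J k), hatW J W ε k i t * ∑ j, PO t j
        ≤ (X + 2*ε) * (lam + ε*((L:ℝ)+2)) := by
      have step1 : ∑ t ∈ bdry (J k), hatW J W ε k i t * ∑ j, PO t j
          ≤ ∑ t ∈ bdry (J k), hatW J W ε k i t * (lam + ε*((L:ℝ)+2)) := by
        apply Finset.sum_le_sum
        intro t ht
        exact mul_le_mul_of_nonneg_left (hgL t ht)
          (hatW_nonneg J W ε (fun a b => ((hblock k hk).1 a b).1) hε0 i t)
      have step2 : ∑ t ∈ bdry (J k), hatW J W ε k i t * (lam + ε*((L:ℝ)+2))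
          = ((∑ t ∈ bdry (J k), W k i t) + ((bdry (J k)).card : ℝ) * ε)
            * (lam + ε*((L:ℝ)+2)) := by
        rw [← Finset.sum_mul]
        congr 1
        rw [Finset.sum_congr rfl (fun t ht => by
          show hatW J W ε k i t = W k i t + ε
          unfold hatW
          rw [if_pos ⟨hiJ, Finset.mem_union_right _ ht⟩])]
        rw [Finset.sum_add_distrib, Finset.sum_const, nsmul_eq_mul]
      have hB0 : 0 ≤ lam + ε*((L:ℝ)+2) := by
        have : (0:ℝ) ≤ ε*((L:ℝ)+2) := by positivity
        linarith
      have hcb : ((bdry (J k)).card : ℝ) ≤ 2 := by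
        exact_mod_cast card_bdry_le (hB1.1 k hk)
      have hsum2 : (∑ t ∈ bdry (J k), W k i t) + ((bdry (J k)).card : ℝ) * ε
          ≤ X + 2*ε := by nlinarith
      calc ∑ t ∈ bdry (J k), hatW J W ε k i t * ∑ j, PO t j ≤ _ := step1
        _ = _ := step2
        _ ≤ (X + 2*ε) * (lam + ε*((L:ℝ)+2)) := mul_le_mul_of_nonneg_right hsum2 hB0
    have hjj : ∑ t ∈ J k, hatW J W ε k i t * ∑ j, PO t j
        ≤ (L:ℝ) * (ε * (max 1 Wbar + ε*((L:ℝ)+2))) := by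
      have step1 : ∀ t ∈ J k, hatW J W ε k i t * ∑ j, PO t j
          ≤ ε * (max 1 Wbar + ε*((L:ℝ)+2)) := by
        intro t ht
        have hWz : W k i t = 0 :=
          (hblock k hk).2.2 i hiJ t (fun hb => (mem_bdry.1 hb).1 ht)
        have hFe : hatW J W ε k i t = ε := by
          unfold hatW
          rw [hWz, if_pos ⟨hiJ, Finset.mem_union_left _ ht⟩, zero_add]
        rw [hFe]
        exact mul_le_mul_of_nonneg_left (hgB t) hε0
      have h := Finset.sum_le_card_nsmul (J k) _ _ step1
      rw [nsmul_eq_mul] at h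
      have hcL : ((J k).card : ℝ) ≤ (L:ℝ) := by
        have : (J k).card ≤ L := by rw [hL]; exact Finset.le_sup (f := fun k => (J k).card) hk
        exact_mod_cast this
      have hC0 : 0 ≤ ε * (max 1 Wbar + ε*((L:ℝ)+2)) := by
        have h1 : (0:ℝ) ≤ max 1 Wbar := le_trans zero_le_one (le_max_left _ _)
        have h2 : (0:ℝ) ≤ ε*((L:ℝ)+2) := by positivity
        exact mul_nonneg hε0 (by linarith)
      calc ∑ t ∈ J k, hatW J W ε k i t * ∑ j, PO t j ≤ _ := h
        _ ≤ (L:ℝ) * (ε * (max 1 Wbar + ε*((L:ℝ)+2))) :=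
          mul_le_mul_of_nonneg_right hcL hC0
    linarith
  refine ⟨?_, ?_, ?_⟩
  · intro k hk hk0 i hi
    have hiJ := hiJk_of k hk i hi
    have hXl : ∑ t ∈ bdry (J k), W k i t ≤ lam := by
      rw [bsum_eq hn hm hB1 hcover hk i]
      exact hlam_ge k hk i hi
    calc ∑ j, (PE * PO) i j ≤ _ := keyEven k hk hk0 i hiJ lam hXl
      _ = lam ^ 2 + ε * (lam * ((L : ℝ) + 4) + ε * ((L : ℝ) + 2) ^ 2
          + (L : ℝ) * max 1 Wbar) := by ring
  · intro k hk hk1 i hi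
    have hiJ := hiJk_of k hk i hi
    have hrowE : ∀ t, PE i t = if i = t then 1 else 0 := by
      intro t
      rw [hPE]
      exact row_parity_id hblock ε 0
        (fun c hc hc0 hic => hi (mem_Jminus.2 ⟨c, hc, by omega, hic⟩)) t
    rw [rs_mul PE PO i]
    rw [Finset.sum_congr rfl (fun t _ => by rw [hrowE t])]
    simp only [ite_mul, one_mul, zero_mul]
    rw [Finset.sum_ite_eq]
    simp only [Finset.mem_univ, if_true]
    rw [hg_mem k hk hk1 i hiJ, bsum_eq hn hm hB1 hcover hk i]
    have h1 := hlam_ge k hk i hi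
    have h2 : ε * ((J k ∪ bdry (J k)).card : ℝ) ≤ ε * ((L:ℝ)+2) :=
      mul_le_mul_of_nonneg_left (hcardLe k hk) hε0
    linarith
  · intro k hk hk0 i hiJ hi
    have hXw := hWbar_ge k hk i hiJ
    calc ∑ j, (PE * PO) i j ≤ _ := keyEven k hk hk0 i hiJ Wbar hXw
      _ = lam * Wbar + ε * (Wbar * ((L : ℝ) + 2) + 2 * lam + ε * ((L : ℝ) + 2) ^ 2
          + (L : ℝ) * max 1 Wbar) := by ring
end

section
/- Let P be a Markov kernel on X^n with Wasserstein matrix W (all entries nonnegative). Then for any two probability measures μ, ν on X^n, any coupling Ψ of μ and ν, any bounded measurable f : X^n → ℝ, and any integer k ≥ 1: |∫ P^k f dμ − ∫ P^k f dν| ≤ Σ_{i,j∈I} osc_i(f)·(W^k)_{i,j}·Ψ({(x,z) : x_j ≠ z_j}) ≤ (Σ_{i∈I} osc_i(f))·‖W‖_∞^k·max_{j∈I} Ψ({(x,z) : x_j ≠ z_j}). -/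
open MeasureTheory ProbabilityTheory Finset
open scoped ENNReal

/-- Oscillation of `f` with respect to the `i`-th coordinate. -/
noncomputable def osc {n : ℕ} {X : Type*} (i : Fin n) (f : (Fin n → X) → ℝ) : ℝ :=
  sSup {d : ℝ | ∃ x z : Fin n → X, (∀ k, k ≠ i → x k = z k) ∧ d = |f x - f z|}

/-- `W` is a Wasserstein matrix for the Markov kernel `P` on `X^n`. -/
def IsWassersteinMatrix {n : ℕ} {X : Type*} [MeasurableSpace X]
    (P : Kernel (Fin n → X) (Fin n → X)) (W : Matrix (Fin n) (Fin n) ℝ) : Prop :=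
  (∀ i j, 0 ≤ W i j) ∧
  ∀ f : (Fin n → X) → ℝ, Measurable f → (∃ C, ∀ x, |f x| ≤ C) →
    ∀ j, osc j (fun x => ∫ y, f y ∂(P x)) ≤ ∑ i, osc i f * W i j

/-- `Ψ` is a coupling of `μ` and `ν`. -/
def IsCoupling {E : Type*} [MeasurableSpace E] (Ψ : Measure (E × E)) (μ ν : Measure E) : Prop :=
  Ψ.map Prod.fst = μ ∧ Ψ.map Prod.snd = ν

/-- `k`-fold composition of a Markov kernel with itself. -/
noncomputable def kpow {E : Type*} [MeasurableSpace E] (P : Kernel E E) : ℕ → Kernel E E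
  | 0 => Kernel.id
  | (k + 1) => P ∘ₖ kpow P k

section Aux

variable {n : ℕ} {X : Type*}

lemma osc_bddAbove (i : Fin n) (f : (Fin n → X) → ℝ) {C : ℝ} (hC : ∀ x, |f x| ≤ C) :
    BddAbove {d : ℝ | ∃ x z : Fin n → X, (∀ k, k ≠ i → x k = z k) ∧ d = |f x - f z|} := by
  refine ⟨C + C, ?_⟩
  rintro d ⟨x, z, -, rfl⟩
  exact (abs_sub _ _).trans (add_le_add (hC x) (hC z))

lemma osc_nonneg [Nonempty (Fin n → X)] (i : Fin n) (f : (Fin n → X) → ℝ)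
    {C : ℝ} (hC : ∀ x, |f x| ≤ C) : 0 ≤ osc i f := by
  obtain ⟨x⟩ := ‹Nonempty (Fin n → X)›
  exact le_csSup (osc_bddAbove i f hC) ⟨x, x, fun _ _ => rfl, by simp⟩

lemma abs_sub_le_osc (i : Fin n) (f : (Fin n → X) → ℝ) {C : ℝ} (hC : ∀ x, |f x| ≤ C)
    {x z : Fin n → X} (h : ∀ k, k ≠ i → x k = z k) : |f x - f z| ≤ osc i f :=
  le_csSup (osc_bddAbove i f hC) ⟨x, z, h, rfl⟩

lemma osc_le [Nonempty (Fin n → X)] (i : Fin n) (f : (Fin n → X) → ℝ) {B : ℝ}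
    (hB : ∀ x z : Fin n → X, (∀ k, k ≠ i → x k = z k) → |f x - f z| ≤ B) :
    osc i f ≤ B := by
  obtain ⟨x⟩ := ‹Nonempty (Fin n → X)›
  refine csSup_le ⟨0, x, x, fun _ _ => rfl, by simp⟩ ?_
  rintro d ⟨x, z, h, rfl⟩
  exact hB x z h

/-- Telescoping bound: if `x` and `z` agree outside `s`, then
`|f x - f z| ≤ ∑ j ∈ s, osc j f`. -/
lemma abs_sub_le_sum_osc (f : (Fin n → X) → ℝ) {C : ℝ} (hC : ∀ x, |f x| ≤ C)
    (s : Finset (Fin n)) :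
    ∀ x z : Fin n → X, (∀ j ∉ s, x j = z j) → |f x - f z| ≤ ∑ j ∈ s, osc j f := by
  classical
  induction s using Finset.induction_on with
  | empty =>
    intro x z h
    have : x = z := funext fun j => h j (Finset.notMem_empty j)
    simp [this]
  | @insert i s hi ih =>
    intro x z h
    set y : Fin n → X := Function.update x i (z i) with hy
    have hxy : |f x - f y| ≤ osc i f := by
      refine abs_sub_le_osc i f hC fun k hk => ?_
      simp [hy, Function.update_of_ne hk]
    have hyz : |f y - f z| ≤ ∑ j ∈ s, osc j f := by
      refine ih y z fun j hj => ?_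
      by_cases hji : j = i
      · subst hji; simp [hy]
      · have : j ∉ insert i s := by simp [hji, hj]
        simp [hy, Function.update_of_ne hji, h j this]
    calc |f x - f z| = |(f x - f y) + (f y - f z)| := by ring_nf
      _ ≤ |f x - f y| + |f y - f z| := abs_add_le _ _
      _ ≤ osc i f + ∑ j ∈ s, osc j f := add_le_add hxy hyz
      _ = ∑ j ∈ insert i s, osc j f := by rw [Finset.sum_insert hi]

end Aux

section Kern

variable {E : Type*} [MeasurableSpace E]

lemma integrable_of_abs_le (μ : Measure E) [IsProbabilityMeasure μ] {f : E → ℝ}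
    (hf : Measurable f) {C : ℝ} (hC : ∀ x, |f x| ≤ C) : Integrable f μ :=
  (integrable_const C).mono' hf.aestronglyMeasurable
    (ae_of_all _ fun x => by simpa [Real.norm_eq_abs] using hC x)

lemma abs_integral_le_bound (μ : Measure E) [IsProbabilityMeasure μ] {f : E → ℝ}
    {C : ℝ} (hC : ∀ x, |f x| ≤ C) : |∫ x, f x ∂μ| ≤ C := by
  calc |∫ x, f x ∂μ| = ‖∫ x, f x ∂μ‖ := (Real.norm_eq_abs _).symm
    _ ≤ C * (μ Set.univ).toReal :=
        norm_integral_le_of_norm_le_const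
          (ae_of_all _ fun x => by simpa [Real.norm_eq_abs] using hC x)
    _ = C := by simp

instance kpow.isMarkovKernel (P : Kernel E E) [IsMarkovKernel P] (k : ℕ) :
    IsMarkovKernel (kpow P k) := by
  induction k with
  | zero => rw [kpow]; infer_instance
  | succ k ih => rw [kpow]; exact Kernel.IsMarkovKernel.comp P (kpow P k)

lemma measurable_kint (κ : Kernel E E) [IsSFiniteKernel κ] {f : E → ℝ} (hf : Measurable f) :
    Measurable fun x => ∫ y, f y ∂(κ x) := by
  have : StronglyMeasurable (Function.uncurry fun (_ : E) (y : E) => f y) :=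
    (hf.stronglyMeasurable.comp_measurable measurable_snd)
  exact (MeasureTheory.StronglyMeasurable.integral_kernel_prod_right (κ := κ) this).measurable

lemma kint_comp (η κ : Kernel E E) [IsMarkovKernel η] [IsMarkovKernel κ]
    {f : E → ℝ} (hf : Measurable f) {C : ℝ} (hC : ∀ x, |f x| ≤ C) (x : E) :
    ∫ y, f y ∂((η ∘ₖ κ) x) = ∫ y, (∫ w, f w ∂(η y)) ∂(κ x) := by
  rw [Kernel.comp_eq_snd_compProd, Kernel.snd_apply,
    integral_map measurable_snd.aemeasurable hf.aestronglyMeasurable]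
  rw [ProbabilityTheory.integral_compProd (f := fun z : E × E => f z.2)
    (integrable_of_abs_le _ (hf.comp measurable_snd) (fun p => hC p.2))]
  simp [Kernel.prodMkLeft_apply]

end Kern

section OscKpow

variable {n : ℕ} {X : Type*} [MeasurableSpace X]

lemma matrix_pow_nonneg {W : Matrix (Fin n) (Fin n) ℝ} (hW0 : ∀ i j, 0 ≤ W i j) (k : ℕ) :
    ∀ i j, 0 ≤ (W ^ k) i j := by
  induction k with
  | zero => intro i j; rw [pow_zero]; by_cases h : i = j <;> simp [Matrix.one_apply, h]
  | succ k ih =>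
      intro i j
      rw [pow_succ, Matrix.mul_apply]
      exact Finset.sum_nonneg fun l _ => mul_nonneg (ih i l) (hW0 l j)

lemma osc_kpow (P : Kernel (Fin n → X) (Fin n → X)) [IsMarkovKernel P]
    (W : Matrix (Fin n) (Fin n) ℝ) (hW : IsWassersteinMatrix P W) (k : ℕ) :
    ∀ (f : (Fin n → X) → ℝ), Measurable f → ∀ (C : ℝ), (∀ x, |f x| ≤ C) →
    ∀ j, osc j (fun x => ∫ y, f y ∂(kpow P k x)) ≤ ∑ i, osc i f * (W ^ k) i j := by
  induction k with
  | zero =>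
    intro f hf C hC j
    have he : (fun x => ∫ y, f y ∂(kpow P 0 x)) = f := by
      funext x
      rw [show kpow P 0 = Kernel.id from rfl, Kernel.id_apply,
        integral_dirac' f x hf.stronglyMeasurable]
    rw [he, pow_zero]
    have : ∑ i, osc i f * (1 : Matrix (Fin n) (Fin n) ℝ) i j = osc j f := by
      rw [Finset.sum_eq_single j]
      · simp [Matrix.one_apply]
      · intro i _ hij; simp [Matrix.one_apply, hij]
      · simp
    rw [this]
  | succ k ih =>
    intro f hf C hC j
    set g : (Fin n → X) → ℝ := fun y => ∫ w, f w ∂(P y) with hg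
    have hgm : Measurable g := measurable_kint P hf
    have hgC : ∀ y, |g y| ≤ C := fun y => abs_integral_le_bound (P y) hC
    have he : (fun x => ∫ y, f y ∂(kpow P (k + 1) x))
        = fun x => ∫ y, g y ∂(kpow P k x) := by
      funext x
      rw [show kpow P (k + 1) = P ∘ₖ kpow P k from rfl, kint_comp P (kpow P k) hf hC]
    rw [he]
    calc osc j (fun x => ∫ y, g y ∂(kpow P k x)) ≤ ∑ i, osc i g * (W ^ k) i j :=
          ih g hgm C hgC j
      _ ≤ ∑ i, (∑ l, osc l f * W l i) * (W ^ k) i j := by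
          refine Finset.sum_le_sum fun i _ => ?_
          exact mul_le_mul_of_nonneg_right (hW.2 f hf ⟨C, hC⟩ i)
            (matrix_pow_nonneg hW.1 k i j)
      _ = ∑ l, osc l f * (W ^ (k + 1)) l j := by
          rw [pow_succ']
          simp_rw [Matrix.mul_apply, Finset.sum_mul, Finset.mul_sum]
          rw [Finset.sum_comm]
          congr 1; funext l; congr 1; funext i; ring

end OscKpow

section RowNorm

variable {n : ℕ}

lemma rowsum_le_rowNorm (A : Matrix (Fin n) (Fin n) ℝ) (i : Fin n) :
    ∑ j, |A i j| ≤ rowNorm A :=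
  le_ciSup (f := fun i => ∑ j, |A i j|) (Set.Finite.bddAbove (Set.finite_range _)) i

lemma rowNorm_nonneg (A : Matrix (Fin n) (Fin n) ℝ) (i : Fin n) : 0 ≤ rowNorm A :=
  le_trans (Finset.sum_nonneg fun j _ => abs_nonneg _) (rowsum_le_rowNorm A i)

lemma rowsum_pow_le (W : Matrix (Fin n) (Fin n) ℝ) (m : ℕ) (i : Fin n) :
    ∑ j, |(W ^ (m + 1)) i j| ≤ rowNorm W ^ (m + 1) := by
  induction m generalizing i with
  | zero => simpa using rowsum_le_rowNorm W i
  | succ m ih =>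
    have h1 : ∑ j, |(W ^ (m + 2)) i j| ≤ ∑ l, |W i l| * (rowNorm W ^ (m + 1)) := by
      calc ∑ j, |(W ^ (m + 2)) i j| = ∑ j, |∑ l, W i l * (W ^ (m + 1)) l j| := by
            simp_rw [pow_succ', Matrix.mul_apply]
        _ ≤ ∑ j, ∑ l, |W i l| * |(W ^ (m + 1)) l j| := by
            refine Finset.sum_le_sum fun j _ => ?_
            refine (Finset.abs_sum_le_sum_abs _ _).trans ?_
            refine Finset.sum_le_sum fun l _ => ?_
            rw [abs_mul]
        _ = ∑ l, |W i l| * ∑ j, |(W ^ (m + 1)) l j| := by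
            rw [Finset.sum_comm]; simp_rw [Finset.mul_sum]
        _ ≤ ∑ l, |W i l| * (rowNorm W ^ (m + 1)) := by
            refine Finset.sum_le_sum fun l _ => ?_
            exact mul_le_mul_of_nonneg_left (ih l) (abs_nonneg _)
    calc ∑ j, |(W ^ (m + 2)) i j| ≤ ∑ l, |W i l| * (rowNorm W ^ (m + 1)) := h1
      _ = (∑ l, |W i l|) * rowNorm W ^ (m + 1) := by rw [Finset.sum_mul]
      _ ≤ rowNorm W * rowNorm W ^ (m + 1) :=
          mul_le_mul_of_nonneg_right (rowsum_le_rowNorm W i)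
            (pow_nonneg (rowNorm_nonneg W i) _)
      _ = rowNorm W ^ (m + 2) := by ring

end RowNorm

theorem stmt10 {n : ℕ} {X : Type*} [MeasurableSpace X] [StandardBorelSpace X]
    (P : Kernel (Fin n → X) (Fin n → X)) [IsMarkovKernel P]
    (W : Matrix (Fin n) (Fin n) ℝ) (hW : IsWassersteinMatrix P W)
    (μ ν : Measure (Fin n → X)) [IsProbabilityMeasure μ] [IsProbabilityMeasure ν]
    (Ψ : Measure ((Fin n → X) × (Fin n → X))) [IsProbabilityMeasure Ψ]
    (hΨ : IsCoupling Ψ μ ν)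
    (f : (Fin n → X) → ℝ) (hf : Measurable f) (hfb : ∃ C, ∀ x, |f x| ≤ C)
    (k : ℕ) (hk : 1 ≤ k) :
    |(∫ x, (∫ y, f y ∂(kpow P k x)) ∂μ) - ∫ x, (∫ y, f y ∂(kpow P k x)) ∂ν| ≤
      ∑ i : Fin n, ∑ j : Fin n, osc i f * (W ^ k) i j * (Ψ {q | q.1 j ≠ q.2 j}).toReal ∧
    ∑ i : Fin n, ∑ j : Fin n, osc i f * (W ^ k) i j * (Ψ {q | q.1 j ≠ q.2 j}).toReal ≤
      (∑ i : Fin n, osc i f) * rowNorm W ^ k * ⨆ j : Fin n, (Ψ {q | q.1 j ≠ q.2 j}).toReal := by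
  classical
  rcases isEmpty_or_nonempty (Fin n → X) with hE | hNE
  · exfalso
    have h1 : μ Set.univ = 1 := measure_univ
    rw [Set.univ_eq_empty_iff.mpr hE, measure_empty] at h1
    exact zero_ne_one h1
  obtain ⟨C, hC⟩ := hfb
  -- properties of g = P^k f
  set g : (Fin n → X) → ℝ := fun x => ∫ y, f y ∂(kpow P k x) with hgdef
  have hgm : Measurable g := measurable_kint (kpow P k) hf
  have hgC : ∀ x, |g x| ≤ C := fun x => abs_integral_le_bound (kpow P k x) hC
  -- measurability of the sets
  have hAmeas : ∀ j : Fin n,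
      MeasurableSet {q : (Fin n → X) × (Fin n → X) | q.1 j ≠ q.2 j} := by
    intro j
    letI := upgradeStandardBorel X
    have h1 : MeasurableSet {q : (Fin n → X) × (Fin n → X) | q.1 j = q.2 j} :=
      MeasureTheory.StronglyMeasurable.measurableSet_eq_fun
        ((measurable_pi_apply j).comp measurable_fst).stronglyMeasurable
        ((measurable_pi_apply j).comp measurable_snd).stronglyMeasurable
    exact h1.compl
  -- notation
  set Q : Fin n → ℝ := fun j => (Ψ {q | q.1 j ≠ q.2 j}).toReal with hQdef
  have hQ0 : ∀ j, 0 ≤ Q j := fun j => ENNReal.toReal_nonneg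
  have hoscg : ∀ j, osc j g ≤ ∑ i, osc i f * (W ^ k) i j :=
    osc_kpow P W hW k f hf C hC
  have hosc0 : ∀ i, 0 ≤ osc i f := fun i => osc_nonneg i f hC
  have hoscg0 : ∀ i, 0 ≤ osc i g := fun i => osc_nonneg i g hgC
  constructor
  · -- first inequality
    -- coupling rewrite
    have hμ : ∫ x, g x ∂μ = ∫ p, g p.1 ∂Ψ := by
      rw [← hΨ.1, integral_map measurable_fst.aemeasurable hgm.aestronglyMeasurable]
    have hν : ∫ x, g x ∂ν = ∫ p, g p.2 ∂Ψ := by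
      rw [← hΨ.2, integral_map measurable_snd.aemeasurable hgm.aestronglyMeasurable]
    have hint1 : Integrable (fun p : (Fin n → X) × (Fin n → X) => g p.1) Ψ :=
      integrable_of_abs_le Ψ (hgm.comp measurable_fst) (fun p => hgC p.1)
    have hint2 : Integrable (fun p : (Fin n → X) × (Fin n → X) => g p.2) Ψ :=
      integrable_of_abs_le Ψ (hgm.comp measurable_snd) (fun p => hgC p.2)
    have hsub : ∫ x, g x ∂μ - ∫ x, g x ∂ν = ∫ p, (g p.1 - g p.2) ∂Ψ := by
      rw [hμ, hν, integral_sub hint1 hint2]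
    -- dominating function
    set b : (Fin n → X) × (Fin n → X) → ℝ :=
      fun p => ∑ j, Set.indicator {q : (Fin n → X) × (Fin n → X) | q.1 j ≠ q.2 j}
        (fun _ => osc j g) p with hbdef
    have hptwise : ∀ p : (Fin n → X) × (Fin n → X), |g p.1 - g p.2| ≤ b p := by
      intro p
      have h1 : |g p.1 - g p.2| ≤ ∑ j ∈ Finset.univ.filter (fun j => p.1 j ≠ p.2 j),
          osc j g := by
        refine abs_sub_le_sum_osc g hgC _ p.1 p.2 fun j hj => ?_
        by_contra hne
        exact hj (Finset.mem_filter.mpr ⟨Finset.mem_univ j, hne⟩)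
      refine h1.trans (le_of_eq ?_)
      rw [Finset.sum_filter]
      refine Finset.sum_congr rfl fun j _ => ?_
      rw [Set.indicator_apply]
      by_cases h : p.1 j ≠ p.2 j <;> simp [h]
    have hbint : Integrable b Ψ := by
      refine integrable_finset_sum _ fun j _ => ?_
      exact (integrable_const (osc j g)).indicator (hAmeas j)
    have hbval : ∫ p, b p ∂Ψ = ∑ j, osc j g * Q j := by
      rw [hbdef]
      rw [integral_finset_sum _ fun j _ =>
        (integrable_const (osc j g)).indicator (hAmeas j)]
      refine Finset.sum_congr rfl fun j _ => ?_
      rw [integral_indicator_const _ (hAmeas j)]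
      simp [hQdef, mul_comm, measureReal_def]
    have habs : |∫ p, (g p.1 - g p.2) ∂Ψ| ≤ ∫ p, b p ∂Ψ := by
      calc |∫ p, (g p.1 - g p.2) ∂Ψ| = ‖∫ p, (g p.1 - g p.2) ∂Ψ‖ :=
            (Real.norm_eq_abs _).symm
        _ ≤ ∫ p, ‖g p.1 - g p.2‖ ∂Ψ := norm_integral_le_integral_norm _
        _ ≤ ∫ p, b p ∂Ψ := by
            refine integral_mono (hint1.sub hint2).norm hbint fun p => ?_
            simpa [Real.norm_eq_abs] using hptwise p
    have hfinal : ∑ j, osc j g * Q j ≤ ∑ i, ∑ j, osc i f * (W ^ k) i j * Q j := by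
      calc ∑ j, osc j g * Q j ≤ ∑ j, (∑ i, osc i f * (W ^ k) i j) * Q j := by
            refine Finset.sum_le_sum fun j _ => ?_
            exact mul_le_mul_of_nonneg_right (hoscg j) (hQ0 j)
        _ = ∑ i, ∑ j, osc i f * (W ^ k) i j * Q j := by
            simp_rw [Finset.sum_mul]
            rw [Finset.sum_comm]
    calc |(∫ x, g x ∂μ) - ∫ x, g x ∂ν| = |∫ p, (g p.1 - g p.2) ∂Ψ| := by rw [hsub]
      _ ≤ ∫ p, b p ∂Ψ := habs
      _ = ∑ j, osc j g * Q j := hbval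
      _ ≤ ∑ i, ∑ j, osc i f * (W ^ k) i j * Q j := hfinal
  · -- second inequality
    set M : ℝ := ⨆ j : Fin n, Q j with hMdef
    have hM0 : 0 ≤ M := Real.iSup_nonneg hQ0
    have hQM : ∀ j, Q j ≤ M := fun j =>
      le_ciSup (Set.Finite.bddAbove (Set.finite_range _)) j
    obtain ⟨m, rfl⟩ : ∃ m, k = m + 1 := ⟨k - 1, (Nat.succ_pred_eq_of_pos hk).symm⟩
    have hterm : ∀ i : Fin n, ∑ j, osc i f * (W ^ (m + 1)) i j * Q j ≤
        osc i f * (rowNorm W ^ (m + 1) * M) := by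
      intro i
      have h1 : ∑ j, (W ^ (m + 1)) i j * Q j ≤ rowNorm W ^ (m + 1) * M := by
        calc ∑ j, (W ^ (m + 1)) i j * Q j ≤ ∑ j, (W ^ (m + 1)) i j * M := by
              refine Finset.sum_le_sum fun j _ => ?_
              exact mul_le_mul_of_nonneg_left (hQM j) (matrix_pow_nonneg hW.1 (m + 1) i j)
          _ = (∑ j, (W ^ (m + 1)) i j) * M := by rw [Finset.sum_mul]
          _ ≤ rowNorm W ^ (m + 1) * M := by
              refine mul_le_mul_of_nonneg_right ?_ hM0
              calc ∑ j, (W ^ (m + 1)) i j = ∑ j, |(W ^ (m + 1)) i j| := by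
                    refine Finset.sum_congr rfl fun j _ => ?_
                    rw [abs_of_nonneg (matrix_pow_nonneg hW.1 (m + 1) i j)]
                _ ≤ rowNorm W ^ (m + 1) := rowsum_pow_le W m i
      calc ∑ j, osc i f * (W ^ (m + 1)) i j * Q j
          = osc i f * ∑ j, (W ^ (m + 1)) i j * Q j := by
            rw [Finset.mul_sum]; refine Finset.sum_congr rfl fun j _ => by ring
        _ ≤ osc i f * (rowNorm W ^ (m + 1) * M) :=
            mul_le_mul_of_nonneg_left h1 (hosc0 i)
    calc ∑ i, ∑ j, osc i f * (W ^ (m + 1)) i j * Q j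
        ≤ ∑ i, osc i f * (rowNorm W ^ (m + 1) * M) := Finset.sum_le_sum fun i _ => hterm i
      _ = (∑ i, osc i f) * rowNorm W ^ (m + 1) * M := by
            rw [← Finset.sum_mul, mul_assoc]
end

section
/- Let 𝒥 = (J_1,…,J_m) be an arbitrary cover of I = {1,…,n} and for each k let W^{J_k} have the Gibbs block structure for J_k. Let 𝒲 = W^{J_m}·W^{J_{m−1}}⋯W^{J_1}. For j ∈ I define a_j = min{k : j ∈ J_k} and b_j = min{k : j ∈ ∂J_k} (with the convention min ∅ = ∞). If a_j < b_j, then the j-th column of 𝒲 is zero, i.e. 𝒲e_j = 0 where e_j is the j-th standard basis vector. -/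
open Finset

lemma descList_succ (k : ℕ) : descList (k+1) = (k+1) :: descList k := by
  simp only [descList, List.range_succ_eq_map, List.map_cons, List.map_map, Nat.sub_zero]
  congr 1
  apply List.map_congr_left
  intro x _
  simp only [Function.comp]
  omega

theorem stmt12 {n m : ℕ} (hn : 1 ≤ n) (hm : 1 ≤ m)
    (J : ℕ → Finset (Fin n)) (W : ℕ → Matrix (Fin n) (Fin n) ℝ)
    (hcover : ∀ i : Fin n, ∃ k ∈ Finset.Icc 1 m, i ∈ J k)
    (hblock : ∀ k ∈ Finset.Icc 1 m, GibbsBlock (J k) (W k))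
    (j : Fin n)
    (hab : sInf {c : ℕ∞ | ∃ k ∈ Finset.Icc 1 m, j ∈ J k ∧ c = (k : ℕ∞)} <
           sInf {c : ℕ∞ | ∃ k ∈ Finset.Icc 1 m, j ∈ bdry (J k) ∧ c = (k : ℕ∞)}) :
    ∀ i : Fin n, (((descList m).map W).prod) i j = 0 := by
  have hSne : {k : ℕ | (1 ≤ k ∧ k ≤ m) ∧ j ∈ J k}.Nonempty := by
    obtain ⟨k, hk, hjk⟩ := hcover j
    rw [Finset.mem_Icc] at hk
    exact ⟨k, hk, hjk⟩
  set a := sInf {k : ℕ | (1 ≤ k ∧ k ≤ m) ∧ j ∈ J k} with ha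
  have haS := Nat.sInf_mem hSne
  obtain ⟨⟨ha1, ham⟩, hjJa⟩ := haS
  have hnotJ : ∀ k, 1 ≤ k → k < a → j ∉ J k := by
    intro k h1 hk hjk
    have hmem : k ∈ {k : ℕ | (1 ≤ k ∧ k ≤ m) ∧ j ∈ J k} := ⟨⟨h1, le_trans hk.le ham⟩, hjk⟩
    exact absurd (Nat.sInf_le hmem) (not_le.2 hk)
  have hnotB : ∀ k, 1 ≤ k → k < a → j ∉ bdry (J k) := by
    intro k h1 hk hjk
    have h1' : (a : ℕ∞) ≤ sInf {c : ℕ∞ | ∃ k ∈ Finset.Icc 1 m, j ∈ J k ∧ c = (k : ℕ∞)} := by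
      apply le_sInf
      rintro c ⟨k', hk', hj', rfl⟩
      rw [Finset.mem_Icc] at hk'
      have hmem : k' ∈ {k : ℕ | (1 ≤ k ∧ k ≤ m) ∧ j ∈ J k} := ⟨hk', hj'⟩
      exact_mod_cast Nat.sInf_le hmem
    have h2 : sInf {c : ℕ∞ | ∃ k ∈ Finset.Icc 1 m, j ∈ bdry (J k) ∧ c = (k : ℕ∞)} ≤ (k : ℕ∞) :=
      sInf_le ⟨k, Finset.mem_Icc.2 ⟨h1, le_trans hk.le ham⟩, hjk, rfl⟩
    have hlt := lt_of_le_of_lt h1' (lt_of_lt_of_le hab h2)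
    have : a < k := by exact_mod_cast hlt
    omega
  -- column j of W k for k < a is e_j
  have WcolA : ∀ k, 1 ≤ k → k < a → ∀ i, W k i j = if i = j then 1 else 0 := by
    intro k h1 hk i
    obtain ⟨_, hid, hz⟩ := hblock k (Finset.mem_Icc.2 ⟨h1, le_trans hk.le ham⟩)
    by_cases hi : i ∈ J k
    · rw [hz i hi j (hnotB k h1 hk)]
      have : i ≠ j := fun h => hnotJ k h1 hk (h ▸ hi)
      simp [this]
    · exact hid i hi j
  -- column j of W a is zero
  have WcolB : ∀ i, W a i j = 0 := by
    intro i
    obtain ⟨_, hid, hz⟩ := hblock a (Finset.mem_Icc.2 ⟨ha1, ham⟩)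
    by_cases hi : i ∈ J a
    · apply hz i hi j
      simp [bdry, hjJa]
      exact fun h => absurd hjJa h
    · rw [hid i hi j]
      have : i ≠ j := fun h => hi (h ▸ hjJa)
      simp [this]
  have key : ∀ k, k ≤ m → ∀ i, (((descList k).map W).prod) i j
      = if k < a then (if i = j then 1 else 0) else 0 := by
    intro k
    induction k with
    | zero =>
      intro _ i
      have : 0 < a := ha1
      simp [descList, Matrix.one_apply, this]
    | succ k ih =>
      intro hkm i
      rw [descList_succ, List.map_cons, List.prod_cons, Matrix.mul_apply]
      have ih' := ih (by omega)
      rcases lt_trichotomy (k+1) a with h | h | h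
      · have hk : k < a := by omega
        simp only [ih', if_pos hk]
        rw [if_pos h]
        calc (∑ l, W (k+1) i l * if l = j then 1 else 0)
            = W (k+1) i j := by simp [Finset.sum_ite_eq']
          _ = if i = j then 1 else 0 := WcolA (k+1) (by omega) h i
      · have hk : k < a := by omega
        simp only [ih', if_pos hk]
        rw [if_neg (by omega)]
        calc (∑ l, W (k+1) i l * if l = j then 1 else 0)
            = W (k+1) i j := by simp [Finset.sum_ite_eq']
          _ = 0 := h ▸ WcolB i
      · have hk : ¬ k < a := by omega
        simp only [ih', if_neg hk]
        rw [if_neg (by omega)]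
        simp
  intro i
  have := key m le_rfl i
  rw [this, if_neg (by omega)]
end
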